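/- Let u = x_{i_1}···x_{i_d} ∈ M_{n,d,t}, let a_j = n - i_{d-j+1} - (j-1)(t-1), and let r ≥ 1 be the smallest integer with a_r > r - 1. Then the expansion |M_{n,d,t} \ L_u| = Σ_{j=r}^{d} C(a_j, j) satisfies a_d > a_{d-1} > ... > a_r ≥ r, i.e., it is the (unique) binomial (Macaulay) expansion of |M_{n,d,t} \ L_u| with respect to d. In particular a_j - a_{j-1} ≥ 1 for all j and C(a_j, j) = 0 for j < r. -/

import Mathlib

open Finset

/-- The set of `t`-spread "monomials" of degree `d` in variables `x_1,...,x_n`,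
identified with `d`-element subsets of `{1,...,n}` with consecutive gaps `≥ t`. -/
def M (n d t : ℕ) : Finset (Finset ℕ) :=
  (Finset.powersetCard d (Finset.Icc 1 n)).filter
    (fun F => ∀ i ∈ F, ∀ j ∈ F, i < j → i + t ≤ j)

/-- The `τ`-shadow of a family `L ⊆ M n d t`. -/
def shad (τ n d : ℕ) (L : Finset (Finset ℕ)) : Finset (Finset ℕ) :=
  (M n (d + 1) τ).filter (fun G => ∃ F ∈ L, F ⊆ G)

/-- `F >_lex G` : the smallest element of the symmetric difference belongs to `F`. -/
def lexGT (F G : Finset ℕ) : Prop :=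
  ∃ k, k ∈ F ∧ k ∉ G ∧ ∀ j < k, (j ∈ F ↔ j ∈ G)

/-- `L` is a `t`-spread lex set in `M n d t` (a lex up-set). -/
def IsLexSet (n d t : ℕ) (L : Finset (Finset ℕ)) : Prop :=
  L ⊆ M n d t ∧ ∀ u ∈ L, ∀ v ∈ M n d t, lexGT v u → v ∈ L

/-- `L` is a `t`-spread strongly stable set in `M n d t`. -/
def IsSSS (n d t : ℕ) (L : Finset (Finset ℕ)) : Prop :=
  L ⊆ M n d t ∧ ∀ F ∈ L, ∀ j ∈ F, ∀ i < j, i ∉ F →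
    insert i (F.erase j) ∈ M n d t → insert i (F.erase j) ∈ L

/-- number of members of `L` with maximum element `= i`. -/
def mEq (i : ℕ) (L : Finset (Finset ℕ)) : ℕ :=
  (L.filter (fun F => i ∈ F ∧ ∀ j ∈ F, j ≤ i)).card

/-- number of members of `L` with maximum element `≤ i`. -/
def mLe (i : ℕ) (L : Finset (Finset ℕ)) : ℕ :=
  (L.filter (fun F => ∀ j ∈ F, j ≤ i)).card

lemma mem_M_iff {n d t : ℕ} {F : Finset ℕ} :
    F ∈ M n d t ↔ F ⊆ Finset.Icc 1 n ∧ F.card = d ∧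
      ∀ i ∈ F, ∀ j ∈ F, i < j → i + t ≤ j := by
  simp [M, Finset.mem_powersetCard, and_assoc]

lemma spread_count (t : ℕ) (ht : 1 ≤ t) : ∀ N k : ℕ,
    (M N k t).card = Nat.choose (N - (k - 1) * (t - 1)) k := by
  intro N
  induction N using Nat.strong_induction_on with
  | _ N IH =>
    intro k
    match k with
    | 0 =>
      have : M N 0 t = {∅} := by
        ext F
        simp only [mem_M_iff, Finset.mem_singleton, Finset.card_eq_zero]
        constructor
        · rintro ⟨-, h, -⟩; exact h
        · rintro rfl; simp
      simp [this]
    | (k' + 1) =>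
      match N with
      | 0 =>
        have : M 0 (k'+1) t = ∅ := by
          ext F
          simp only [mem_M_iff, Finset.notMem_empty, iff_false, not_and]
          intro hsub hcard
          exfalso
          have : F = ∅ := by
            rw [← Finset.subset_empty]
            simpa using hsub
          simp [this] at hcard
        simp [this]
      | (N' + 1) =>
        set N := N' + 1
        -- split by membership of N
        have hsplit : (M N (k'+1) t).card =
            ((M N (k'+1) t).filter (fun F => N ∉ F)).card +
            ((M N (k'+1) t).filter (fun F => N ∈ F)).card := by
          rw [← Finset.card_filter_add_card_filter_not (p := fun F => N ∉ F)]
          congr 2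
          ext F
          simp
        have h1 : (M N (k'+1) t).filter (fun F => N ∉ F) = M N' (k'+1) t := by
          ext F
          simp only [Finset.mem_filter, mem_M_iff]
          constructor
          · rintro ⟨⟨hsub, hcard, hsp⟩, hN⟩
            refine ⟨?_, hcard, hsp⟩
            intro x hx
            have := hsub hx
            simp only [Finset.mem_Icc] at this ⊢
            have : x ≠ N := fun h => hN (h ▸ hx)
            omega
          · rintro ⟨hsub, hcard, hsp⟩
            refine ⟨⟨?_, hcard, hsp⟩, ?_⟩
            · intro x hx
              have := hsub hx
              simp only [Finset.mem_Icc] at this ⊢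
              omega
            · intro hN
              have := hsub hN
              simp only [Finset.mem_Icc] at this
              omega
        have h2 : ((M N (k'+1) t).filter (fun F => N ∈ F)).card
            = (M (N - t) k' t).card := by
          apply Finset.card_nbij' (fun F => F.erase N) (fun G => insert N G)
          · intro F hF
            simp only [Finset.mem_coe, Finset.mem_filter, mem_M_iff] at hF
            obtain ⟨⟨hsub, hcard, hsp⟩, hN⟩ := hF
            refine mem_M_iff.mpr ⟨?_, ?_, ?_⟩
            · intro x hx
              rw [Finset.mem_erase] at hx
              obtain ⟨hxN, hxF⟩ := hx
              have h1 := hsub hxF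
              simp only [Finset.mem_Icc] at h1 ⊢
              have : x + t ≤ N := by
                apply hsp x hxF N hN
                omega
              omega
            · rw [Finset.card_erase_of_mem hN, hcard]; omega
            · intro x hx y hy hxy
              exact hsp x (Finset.mem_of_mem_erase hx) y (Finset.mem_of_mem_erase hy) hxy
          · intro G hG
            rw [Finset.mem_coe, mem_M_iff] at hG
            obtain ⟨hsub, hcard, hsp⟩ := hG
            have hNG : N ∉ G := by
              intro h
              have := hsub h
              simp only [Finset.mem_Icc] at this
              omega
            have hGle : ∀ x ∈ G, x + t ≤ N := by
              intro x hx
              have := hsub hx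
              simp only [Finset.mem_Icc] at this
              omega
            simp only [Finset.mem_coe, Finset.mem_filter, mem_M_iff]
            refine ⟨⟨?_, ?_, ?_⟩, by simp⟩
            · intro x hx
              rw [Finset.mem_insert] at hx
              rcases hx with rfl | hx
              · simp only [Finset.mem_Icc]; omega
              · have := hsub hx
                simp only [Finset.mem_Icc] at this ⊢
                omega
            · rw [Finset.card_insert_of_notMem hNG, hcard]
            · intro x hx y hy hxy
              rw [Finset.mem_insert] at hx hy
              rcases hx with rfl | hx
              · rcases hy with rfl | hy
                · omega
                · have := hsub hy; simp only [Finset.mem_Icc] at this; omega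
              · rcases hy with rfl | hy
                · exact hGle x hx
                · exact hsp x hx y hy hxy
          · intro F hF
            simp only [Finset.mem_coe, Finset.mem_filter] at hF
            exact Finset.insert_erase hF.2
          · intro G hG
            rw [Finset.mem_coe, mem_M_iff] at hG
            apply Finset.erase_insert
            intro h
            have := hG.1 h
            simp only [Finset.mem_Icc] at this
            omega
        rw [hsplit, h1, h2, IH N' (by omega) (k'+1), IH (N - t) (by omega) k']
        -- arithmetic
        simp only [Nat.add_sub_cancel]
        rcases Nat.eq_zero_or_pos k' with rfl | hk'
        · norm_num [Nat.choose_one_right]; rfl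
        · have he : k' * (t-1) = (k'-1)*(t-1) + (t-1) := by
            cases k' with
            | zero => omega
            | succ m => simp [Nat.succ_sub_one, Nat.succ_mul]
          have h3 : N - t - (k'-1)*(t-1) = N - k'*(t-1) - 1 := by omega
          have h4 : N' - k'*(t-1) = N - k'*(t-1) - 1 := by omega
          rw [h3, h4]
          rcases Nat.eq_zero_or_pos (N - k'*(t-1)) with hz | hp
          · have c1 : Nat.choose 0 (k'+1) = 0 := Nat.choose_eq_zero_of_lt (by omega)
            have c2 : Nat.choose 0 k' = 0 := Nat.choose_eq_zero_of_lt (by omega)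
            rw [hz]
            simp only [Nat.zero_sub, c1, c2]
          · obtain ⟨A, hA⟩ : ∃ A, N - k'*(t-1) = A + 1 := ⟨N - k'*(t-1) - 1, by omega⟩
            rw [hA]
            simp only [Nat.add_sub_cancel]
            rw [Nat.choose_succ_succ]
            simp only [Nat.succ_eq_add_one]
            omega


open Classical

/-- with `a_j = n - i_{d-j+1} - (j-1)(t-1)` and `r ≥ 1` smallest with
`a_r > r - 1`, the expansion `|M_{n,d,t} \ L_u| = Σ_{j=r}^d C(a_j, j)` is the binomial
(Macaulay) expansion with respect to `d`: the `a_j` are strictly increasing,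
`a_r ≥ r`, and `C(a_j, j) = 0` for `j < r`. -/
theorem macaulay_expansion_of_Lu (n d t : ℕ) (ht : 1 ≤ t) (hd : 1 ≤ d)
    (i : ℕ → ℕ) (hi : ∀ j k, 1 ≤ j → j < k → k ≤ d → i j < i k)
    (u : Finset ℕ) (hu : u = (Finset.Icc 1 d).image i) (huM : u ∈ M n d t)
    (a : ℕ → ℕ) (ha : ∀ j, a j = n - i (d - j + 1) - (j - 1) * (t - 1))
    (r : ℕ) (hr1 : 1 ≤ r) (hrd : r ≤ d) (hr : r ≤ a r)
    (hrmin : ∀ j, 1 ≤ j → j < r → a j ≤ j - 1) :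
    (∀ j, r ≤ j → j < d → a j < a (j + 1)) ∧
    (∀ j, 1 ≤ j → j < r → Nat.choose (a j) j = 0) ∧
    (M n d t \ (M n d t).filter (fun v => v = u ∨ lexGT v u)).card =
      ∑ j ∈ Finset.Icc r d, Nat.choose (a j) j := by
  classical
  obtain ⟨husub, hucard, husp⟩ := mem_M_iff.mp huM
  have hiu : ∀ m, 1 ≤ m → m ≤ d → i m ∈ u := by
    intro m h1 h2
    rw [hu]
    exact Finset.mem_image_of_mem i (Finset.mem_Icc.mpr ⟨h1, h2⟩)
  have hin : ∀ m, 1 ≤ m → m ≤ d → 1 ≤ i m ∧ i m ≤ n := by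
    intro m h1 h2
    have := husub (hiu m h1 h2)
    simpa [Finset.mem_Icc] using this
  have hspread : ∀ m, 1 ≤ m → m < d → i m + t ≤ i (m + 1) := by
    intro m h1 h2
    exact husp _ (hiu m h1 (le_of_lt h2)) _ (hiu (m+1) (by omega) h2)
      (hi m (m+1) h1 (by omega) h2)
  have hab : ∀ j, a j = n - (i (d - j + 1) + (j - 1) * (t - 1)) := by
    intro j; rw [ha]; omega
  -- step inequality for the `b j := i (d-j+1) + (j-1)*(t-1)`
  have bstep : ∀ j, 1 ≤ j → j < d →
      i (d - (j+1) + 1) + ((j+1) - 1) * (t-1) + 1 ≤ i (d - j + 1) + (j - 1) * (t-1) := by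
    intro j h1 h2
    have hm1 : d - (j+1) + 1 = d - j := by omega
    have hm2 : d - j + 1 = (d - j) + 1 := by omega
    have hsp := hspread (d - j) (by omega) (by omega)
    have he : ((j+1) - 1) * (t-1) = (j - 1) * (t-1) + (t-1) := by
      have : (j+1) - 1 = (j - 1) + 1 := by omega
      rw [this, Nat.succ_mul]
    rw [hm1, hm2, he]
    omega
  have part1 : ∀ j, r ≤ j → j < d → a j < a (j + 1) := by
    have hbr : i (d - r + 1) + (r - 1) * (t-1) < n := by
      have h := hr
      rw [hab r] at h
      omega
    have hdec : ∀ j, r ≤ j → j ≤ d →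
        i (d - j + 1) + (j - 1) * (t-1) ≤ i (d - r + 1) + (r - 1) * (t-1) := by
      intro j hrj
      induction j, hrj using Nat.le_induction with
      | base => intro _; exact le_rfl
      | succ k hk IHk =>
        intro hkd
        have h1 := bstep k (by omega) (by omega)
        have h2 := IHk (by omega)
        omega
    intro j hrj hjd
    have h1 := bstep j (by omega) hjd
    have h2 := hdec (j+1) (by omega) (by omega)
    rw [hab j, hab (j+1)]
    omega
  have part2 : ∀ j, 1 ≤ j → j < r → Nat.choose (a j) j = 0 := by
    intro j h1 h2
    exact Nat.choose_eq_zero_of_lt (by have := hrmin j h1 h2; omega)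
  refine ⟨part1, part2, ?_⟩
  -- monotonicity helpers
  have hmono : ∀ j k, 1 ≤ j → j ≤ k → k ≤ d → i j ≤ i k := by
    intro j k h1 h2 h3
    rcases eq_or_lt_of_le h2 with rfl | h
    · exact le_rfl
    · exact le_of_lt (hi j k h1 h h3)
  -- the filtered description of u below i m
  have hufilter : ∀ m, 1 ≤ m → m ≤ d →
      u.filter (fun x => x < i m) = (Finset.Icc 1 (m-1)).image i := by
    intro m hm1 hmd
    ext x
    simp only [Finset.mem_filter, hu, Finset.mem_image, Finset.mem_Icc]
    constructor
    · rintro ⟨⟨j, ⟨hj1, hj2⟩, rfl⟩, hlt⟩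
      refine ⟨j, ⟨hj1, ?_⟩, rfl⟩
      by_contra hcon
      have : m ≤ j := by omega
      have := hmono m j hm1 this hj2
      omega
    · rintro ⟨j, ⟨hj1, hj2⟩, rfl⟩
      exact ⟨⟨j, ⟨hj1, by omega⟩, rfl⟩, hi j m hj1 (by omega) hmd⟩
  have hlowcard : ∀ m, 1 ≤ m → m ≤ d → (u.filter (fun x => x < i m)).card = m - 1 := by
    intro m hm1 hmd
    rw [hufilter m hm1 hmd]
    rw [Finset.card_image_of_injOn]
    · simp
    · intro x hx y hy hxy
      simp only [Finset.coe_Icc, Set.mem_Icc] at hx hy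
      by_contra hne
      rcases Nat.lt_or_ge x y with h | h
      · have := hi x y (by omega) h (by omega); omega
      · have := hi y x (by omega) (by omega) (by omega); omega
  -- the classes
  set S : ℕ → Finset (Finset ℕ) := fun m =>
    (M n d t).filter (fun v => i m ∉ v ∧ ∀ x, x < i m → (x ∈ v ↔ x ∈ u)) with hS
  have hSsub : ∀ m, S m ⊆ M n d t := fun m => Finset.filter_subset _ _
  -- partition equality
  have hpart : (M n d t).filter (fun v => ¬(v = u ∨ lexGT v u))
      = (Finset.Icc 1 d).biUnion S := by
    ext v
    simp only [Finset.mem_filter, Finset.mem_biUnion, Finset.mem_Icc, hS, not_or]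
    constructor
    · rintro ⟨hvM, hne, hnl⟩
      -- take the minimal element of the symmetric difference
      have hDne : ((u \ v) ∪ (v \ u)).Nonempty := by
        rw [Finset.nonempty_iff_ne_empty]
        intro hD
        apply hne
        ext x
        constructor
        · intro hx
          by_contra hx'
          have : x ∈ (u \ v) ∪ (v \ u) := by
            simp [Finset.mem_union, Finset.mem_sdiff, hx, hx']
          rw [hD] at this; simp at this
        · intro hx
          by_contra hx'
          have : x ∈ (u \ v) ∪ (v \ u) := by
            simp [Finset.mem_union, Finset.mem_sdiff, hx, hx']
          rw [hD] at this; simp at this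
      set k := ((u \ v) ∪ (v \ u)).min' hDne with hk
      have hkmem := Finset.min'_mem _ hDne
      have hagree : ∀ j, j < k → (j ∈ v ↔ j ∈ u) := by
        intro j hj
        by_contra hcon
        have : j ∈ (u \ v) ∪ (v \ u) := by
          simp only [Finset.mem_union, Finset.mem_sdiff]
          by_cases h1 : j ∈ v
          · right; exact ⟨h1, fun h2 => hcon ⟨fun _ => h2, fun _ => h1⟩⟩
          · left
            refine ⟨?_, h1⟩
            by_contra h2
            exact hcon ⟨fun h => absurd h h1, fun h => absurd h h2⟩
        have := Finset.min'_le _ _ this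
        omega
      rw [Finset.mem_union, Finset.mem_sdiff, Finset.mem_sdiff] at hkmem
      rcases hkmem with ⟨hku, hkv⟩ | ⟨hkv, hku⟩
      · -- k ∈ u \ v : v is in class S m where i m = k
        have hku2 : k ∈ (Finset.Icc 1 d).image i := by rw [← hu]; exact hku
        obtain ⟨m, hm, hmk⟩ := Finset.mem_image.mp hku2
        rw [Finset.mem_Icc] at hm
        refine ⟨m, hm, hvM, ?_, ?_⟩
        · rw [hmk]; exact hkv
        · intro x hx
          rw [hmk] at hx
          exact hagree x hx
      · -- k ∈ v \ u : then lexGT v u, contradiction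
        exact absurd ⟨k, hkv, hku, hagree⟩ hnl
    · rintro ⟨m, hm, hvM, hmv, hagr⟩
      have hmu : i m ∈ u := hiu m hm.1 hm.2
      refine ⟨hvM, ?_, ?_⟩
      · intro h; rw [h] at hmv; exact hmv hmu
      · rintro ⟨k, hkv, hku, hag⟩
        rcases lt_trichotomy k (i m) with h | h | h
        · exact hku ((hagr k h).mp hkv)
        · rw [h] at hku; exact hku hmu
        · exact hmv ((hag (i m) h).mpr hmu)
  -- disjointness
  have hdisj : ∀ x ∈ Finset.Icc 1 d, ∀ y ∈ Finset.Icc 1 d, x ≠ y →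
      Disjoint (S x) (S y) := by
    have key : ∀ x y, x ∈ Finset.Icc 1 d → y ∈ Finset.Icc 1 d → x < y →
        Disjoint (S x) (S y) := by
      intro x y hx hy hxy
      rw [Finset.disjoint_left]
      intro v hvx hvy
      rw [Finset.mem_Icc] at hx hy
      simp only [hS, Finset.mem_filter] at hvx hvy
      have h1 : i x < i y := hi x y hx.1 hxy hy.2
      have h2 := (hvy.2.2 (i x) h1).mpr (hiu x hx.1 hx.2)
      exact hvx.2.1 h2
    intro x hx y hy hne
    rcases lt_or_gt_of_ne hne with h | h
    · exact key x y hx hy h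
    · exact (key y x hy hx h).symm
  -- cardinality of each class
  have hScard : ∀ m ∈ Finset.Icc 1 d, (S m).card = Nat.choose (a (d - m + 1)) (d - m + 1) := by
    intro m hm
    rw [Finset.mem_Icc] at hm
    obtain ⟨hm1, hmd⟩ := hm
    obtain ⟨hc1, hcn⟩ := hin m hm1 hmd
    have hcu : i m ∈ u := hiu m hm1 hmd
    set c := i m with hc
    set K := d - m + 1 with hK
    have hbij : (S m).card = (M (n - c) K t).card := by
      apply Finset.card_nbij' (fun v => (v.filter (fun x => c < x)).image (fun x => x - c))
        (fun w => u.filter (fun x => x < c) ∪ w.image (fun x => x + c))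
      · -- forward map lands in M (n-c) K t
        intro v hv
        simp only [hS, Finset.mem_coe, Finset.mem_filter] at hv
        obtain ⟨hvM, hcv, hagr⟩ := hv
        obtain ⟨hvsub, hvcard, hvsp⟩ := mem_M_iff.mp hvM
        have hvsplit : v.filter (fun x => x < c) ∪ v.filter (fun x => c < x) = v := by
          ext x
          simp only [Finset.mem_union, Finset.mem_filter]
          constructor
          · rintro (⟨h, _⟩ | ⟨h, _⟩) <;> exact h
          · intro hx
            have hne : x ≠ c := fun e => hcv (by rw [← hc, ← e]; exact hx)
            rcases Nat.lt_or_ge x c with h | h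
            · exact Or.inl ⟨hx, h⟩
            · exact Or.inr ⟨hx, by omega⟩
        have hlow : v.filter (fun x => x < c) = u.filter (fun x => x < c) := by
          ext x
          simp only [Finset.mem_filter]
          constructor
          · rintro ⟨h1, h2⟩; exact ⟨(hagr x h2).mp h1, h2⟩
          · rintro ⟨h1, h2⟩; exact ⟨(hagr x h2).mpr h1, h2⟩
        have hdisj2 : Disjoint (v.filter (fun x => x < c)) (v.filter (fun x => c < x)) := by
          rw [Finset.disjoint_left]
          intro x h1 h2
          simp only [Finset.mem_filter] at h1 h2
          omega
        have hhighcard : (v.filter (fun x => c < x)).card = K := by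
          have := Finset.card_union_of_disjoint hdisj2
          rw [hvsplit] at this
          rw [hlow, hlowcard m hm1 hmd] at this
          omega
        refine mem_M_iff.mpr ⟨?_, ?_, ?_⟩
        · intro y hy
          simp only [Finset.mem_image, Finset.mem_filter] at hy
          obtain ⟨x, ⟨hxv, hcx⟩, rfl⟩ := hy
          have := hvsub hxv
          simp only [Finset.mem_Icc] at this ⊢
          omega
        · rw [Finset.card_image_of_injOn, hhighcard]
          intro x hx y hy hxy
          simp only [Finset.coe_filter, Set.mem_setOf_eq] at hx hy
          have hxy' : x - c = y - c := hxy
          omega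
        · intro y1 hy1 y2 hy2 h12
          simp only [Finset.mem_image, Finset.mem_filter] at hy1 hy2
          obtain ⟨x1, ⟨hx1, hc1'⟩, rfl⟩ := hy1
          obtain ⟨x2, ⟨hx2, hc2'⟩, rfl⟩ := hy2
          have : x1 < x2 := by omega
          have := hvsp x1 hx1 x2 hx2 this
          omega
      · -- backward map lands in S m
        intro w hw
        obtain ⟨hwsub, hwcard, hwsp⟩ := mem_M_iff.mp hw
        have hwmem : ∀ x ∈ w, 1 ≤ x ∧ x ≤ n - c := by
          intro x hx
          have := hwsub hx
          simpa [Finset.mem_Icc] using this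
        have hlowmem : ∀ x ∈ u.filter (fun y => y < c), x ∈ u ∧ x < c := by
          intro x hx
          simpa using hx
        have hdisj3 : Disjoint (u.filter (fun x => x < c)) (w.image (fun x => x + c)) := by
          rw [Finset.disjoint_left]
          intro x h1 h2
          simp only [Finset.mem_filter] at h1
          simp only [Finset.mem_image] at h2
          obtain ⟨y, hy, rfl⟩ := h2
          have := (hwmem y hy).1
          omega
        simp only [hS, Finset.mem_coe, Finset.mem_filter]
        refine ⟨mem_M_iff.mpr ⟨?_, ?_, ?_⟩, ?_, ?_⟩
        · intro x hx
          rw [Finset.mem_union] at hx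
          rcases hx with hx | hx
          · exact husub (hlowmem x hx).1
          · simp only [Finset.mem_image] at hx
            obtain ⟨y, hy, rfl⟩ := hx
            have := hwmem y hy
            simp only [Finset.mem_Icc]
            omega
        · rw [Finset.card_union_of_disjoint hdisj3, hlowcard m hm1 hmd,
            Finset.card_image_of_injOn, hwcard]
          · omega
          · intro x hx y hy hxy
            have hxy' : x + c = y + c := hxy
            omega
        · intro x hx y hy hxy
          rw [Finset.mem_union] at hx hy
          rcases hx with hx | hx <;> rcases hy with hy | hy
          · obtain ⟨hxu, _⟩ := hlowmem x hx
            obtain ⟨hyu, _⟩ := hlowmem y hy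
            exact husp x hxu y hyu hxy
          · obtain ⟨hxu, hxc⟩ := hlowmem x hx
            simp only [Finset.mem_image] at hy
            obtain ⟨z, hz, rfl⟩ := hy
            have h1 := husp x hxu c hcu hxc
            have := (hwmem z hz).1
            omega
          · obtain ⟨hyu, hyc⟩ := hlowmem y hy
            simp only [Finset.mem_image] at hx
            obtain ⟨z, hz, rfl⟩ := hx
            have := (hwmem z hz).1
            omega
          · simp only [Finset.mem_image] at hx hy
            obtain ⟨z1, hz1, rfl⟩ := hx
            obtain ⟨z2, hz2, rfl⟩ := hy
            have : z1 < z2 := by omega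
            have := hwsp z1 hz1 z2 hz2 this
            omega
        · intro hc2
          rw [Finset.mem_union] at hc2
          rcases hc2 with h | h
          · have := hlowmem c h; omega
          · simp only [Finset.mem_image] at h
            obtain ⟨z, hz, hz2⟩ := h
            have := (hwmem z hz).1
            omega
        · intro x hx
          constructor
          · intro h
            rw [Finset.mem_union] at h
            rcases h with h | h
            · exact (hlowmem x h).1
            · simp only [Finset.mem_image] at h
              obtain ⟨z, hz, rfl⟩ := h
              have := (hwmem z hz).1
              omega
          · intro h
            rw [Finset.mem_union]
            left
            simp only [Finset.mem_filter]
            exact ⟨h, hx⟩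
      · -- left inverse
        intro v hv
        simp only [hS, Finset.mem_coe, Finset.mem_filter] at hv
        obtain ⟨hvM, hcv, hagr⟩ := hv
        obtain ⟨hvsub, hvcard, hvsp⟩ := mem_M_iff.mp hvM
        have him : ((v.filter (fun x => c < x)).image (fun x => x - c)).image (fun x => x + c)
            = v.filter (fun x => c < x) := by
          rw [Finset.image_image]
          ext y
          simp only [Finset.mem_image, Finset.mem_filter, Function.comp_apply]
          constructor
          · rintro ⟨x, ⟨hx, hcx⟩, rfl⟩
            have : x - c + c = x := by omega
            rw [this]
            exact ⟨hx, hcx⟩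
          · intro ⟨hy, hcy⟩
            exact ⟨y, ⟨hy, hcy⟩, by omega⟩
        beta_reduce
        rw [him]
        have hlow : u.filter (fun x => x < c) = v.filter (fun x => x < c) := by
          ext x
          simp only [Finset.mem_filter]
          constructor
          · rintro ⟨h1, h2⟩; exact ⟨(hagr x h2).mpr h1, h2⟩
          · rintro ⟨h1, h2⟩; exact ⟨(hagr x h2).mp h1, h2⟩
        rw [hlow]
        ext x
        simp only [Finset.mem_union, Finset.mem_filter]
        constructor
        · rintro (⟨h, _⟩ | ⟨h, _⟩) <;> exact h
        · intro hx
          have hne : x ≠ c := fun e => hcv (by rw [← hc, ← e]; exact hx)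
          rcases Nat.lt_or_ge x c with h | h
          · exact Or.inl ⟨hx, h⟩
          · exact Or.inr ⟨hx, by omega⟩
      · -- right inverse
        intro w hw
        obtain ⟨hwsub, hwcard, hwsp⟩ := mem_M_iff.mp hw
        have hwmem : ∀ x ∈ w, 1 ≤ x ∧ x ≤ n - c := by
          intro x hx
          have := hwsub hx
          simpa [Finset.mem_Icc] using this
        beta_reduce
        rw [Finset.filter_union]
        have h1 : (u.filter (fun x => x < c)).filter (fun x => c < x) = ∅ := by
          rw [Finset.filter_filter]
          apply Finset.filter_false_of_mem
          intro x _
          omega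
        have h2 : (w.image (fun x => x + c)).filter (fun x => c < x) = w.image (fun x => x + c) := by
          apply Finset.filter_true_of_mem
          intro x hx
          simp only [Finset.mem_image] at hx
          obtain ⟨z, hz, rfl⟩ := hx
          have := (hwmem z hz).1
          omega
        rw [h1, h2, Finset.empty_union, Finset.image_image]
        ext x
        simp only [Finset.mem_image, Function.comp_apply]
        constructor
        · rintro ⟨z, hz, rfl⟩
          have : z + c - c = z := by omega
          rw [this]
          exact hz
        · intro hx
          exact ⟨x, hx, by omega⟩
    rw [hbij, spread_count t ht (n - c) K]
    have harg : d - K + 1 = m := by omega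
    rw [ha K, harg]
  -- assemble
  rw [← Finset.filter_not, hpart, Finset.card_biUnion hdisj]
  rw [Finset.sum_congr rfl hScard]
  have hreindex : ∑ m ∈ Finset.Icc 1 d, Nat.choose (a (d - m + 1)) (d - m + 1)
      = ∑ j ∈ Finset.Icc 1 d, Nat.choose (a j) j := by
    apply Finset.sum_nbij' (fun m => d - m + 1) (fun j => d - j + 1)
    · intro x hx; rw [Finset.mem_Icc] at hx ⊢; omega
    · intro x hx; rw [Finset.mem_Icc] at hx ⊢; omega
    · intro x hx; rw [Finset.mem_Icc] at hx; omega
    · intro x hx; rw [Finset.mem_Icc] at hx; omega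
    · intro x hx; rfl
  rw [hreindex]
  symm
  apply Finset.sum_subset
  · intro x hx
    rw [Finset.mem_Icc] at hx ⊢
    omega
  · intro x hx hx2
    rw [Finset.mem_Icc] at hx
    rw [Finset.mem_Icc] at hx2
    exact part2 x hx.1 (by omega)
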